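/- Let β : ℝ → ℝ be continuous and nondecreasing with β(0) = 0, let ε > 0, let μ be a measure on a measurable space, and let u, v be real-valued measurable functions with u, v ∈ L²(μ). Then β̃_ε ∘ u and β̃_ε ∘ v belong to L²(μ) and ∫ (β̃_ε(u) - β̃_ε(v))·(u - v) dμ ≥ ε·∫ (u - v)² dμ. -/

import Mathlib

open MeasureTheory

lemma aux_integrable_mul {α : Type*} [MeasurableSpace α] {μ : Measure α} {f g : α → ℝ}
    (hf : MemLp f 2 μ) (hg : MemLp g 2 μ) : Integrable (fun x => f x * g x) μ := by
  have hint : Integrable (fun x => f x ^ 2 + g x ^ 2) μ :=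
    hf.integrable_sq.add hg.integrable_sq
  refine hint.mono' (hf.aestronglyMeasurable.mul hg.aestronglyMeasurable) ?_
  filter_upwards with x
  have : |f x * g x| ≤ f x ^ 2 + g x ^ 2 := by
    nlinarith [abs_mul (f x) (g x), sq_abs (f x), sq_abs (g x), sq_nonneg (|f x| - |g x|),
      abs_nonneg (f x * g x)]
  rw [Real.norm_eq_abs]
  exact this

theorem stmt_10 {α : Type*} [MeasurableSpace α] (μ : Measure α)
    (β : ℝ → ℝ) (hβc : Continuous β) (hβm : Monotone β) (hβ0 : β 0 = 0)
    (ε : ℝ) (hε : 0 < ε)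
    (g : ℝ → ℝ) (hg : Function.RightInverse g (fun r => r + ε * β r))
    (hg' : Function.LeftInverse g (fun r => r + ε * β r))
    (βt : ℝ → ℝ) (hβt : ∀ r, βt r = β (g r) + ε * r)
    (u v : α → ℝ) (hu : Measurable u) (hv : Measurable v)
    (hu2 : MemLp u 2 μ) (hv2 : MemLp v 2 μ) :
    MemLp (fun x => βt (u x)) 2 μ ∧ MemLp (fun x => βt (v x)) 2 μ ∧
    ε * ∫ x, (u x - v x) ^ 2 ∂μ ≤ ∫ x, (βt (u x) - βt (v x)) * (u x - v x) ∂μ := by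
  -- g 0 = 0
  have hg0 : g 0 = 0 := by
    have h := hg' 0
    simpa [hβ0] using h
  -- g is monotone
  have hgm : Monotone g := by
    intro a b hab
    by_contra h
    push_neg at h
    have hβ' : β (g b) ≤ β (g a) := hβm h.le
    have : b < a := by
      have ha := hg a
      have hb := hg b
      simp only at ha hb
      nlinarith
    exact absurd hab (not_le.mpr this)
  -- key Lipschitz-type bound: for a ≤ b, ε * (β (g b) - β (g a)) ≤ b - a
  have hlip : ∀ a b : ℝ, a ≤ b → ε * (β (g b) - β (g a)) ≤ b - a := by
    intro a b hab
    have ha := hg a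
    have hb := hg b
    simp only at ha hb
    have := hgm hab
    nlinarith
  -- βt is monotone
  have hβtm : Monotone βt := by
    intro a b hab
    rw [hβt, hβt]
    have h1 : β (g a) ≤ β (g b) := hβm (hgm hab)
    nlinarith
  -- bound |βt r| ≤ (1/ε + ε) * |r|
  have hβt0 : βt 0 = 0 := by rw [hβt, hg0, hβ0]; ring
  have hbound : ∀ r : ℝ, |βt r| ≤ (1/ε + ε) * |r| := by
    intro r
    rcases le_or_gt 0 r with hr | hr
    · have h1 : 0 ≤ βt r := hβt0 ▸ hβtm hr
      have h2 := hlip 0 r hr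
      rw [hg0, hβ0] at h2
      have h3 : β (g r) ≤ r / ε := (le_div_iff₀ hε).mpr (by nlinarith)
      rw [abs_of_nonneg h1, abs_of_nonneg hr, hβt]
      calc β (g r) + ε * r ≤ r / ε + ε * r := by linarith
        _ = (1/ε + ε) * r := by ring
    · have h1 : βt r ≤ 0 := hβt0 ▸ hβtm hr.le
      have h2 := hlip r 0 hr.le
      rw [hg0, hβ0] at h2
      have h3 : -β (g r) ≤ (-r) / ε := (le_div_iff₀ hε).mpr (by nlinarith)
      rw [abs_of_nonpos h1, abs_of_neg hr, hβt]
      calc -(β (g r) + ε * r) = -β (g r) + ε * (-r) := by ring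
        _ ≤ (-r) / ε + ε * (-r) := by linarith
        _ = (1/ε + ε) * (-r) := by ring
  -- measurability of βt ∘ u and βt ∘ v
  have hβtmeas : Measurable βt := by
    have heq : βt = fun r => β (g r) + ε * r := funext hβt
    rw [heq]
    exact (hβc.measurable.comp hgm.measurable).add (measurable_const.mul measurable_id)
  -- MemLp of βt ∘ u
  have hmem : ∀ w : α → ℝ, Measurable w → MemLp w 2 μ → MemLp (fun x => βt (w x)) 2 μ := by
    intro w hw hw2
    have hKw : MemLp (fun x => (1/ε + ε) * w x) 2 μ := hw2.const_mul _
    refine MemLp.of_le hKw ((hβtmeas.comp hw).aestronglyMeasurable) ?_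
    filter_upwards with x
    rw [Real.norm_eq_abs, Real.norm_eq_abs, abs_mul]
    calc |βt (w x)| ≤ (1/ε + ε) * |w x| := hbound _
      _ ≤ |1/ε + ε| * |w x| := by
          have : (0:ℝ) ≤ 1/ε + ε := by positivity
          rw [abs_of_nonneg this]
  have hmu := hmem u hu hu2
  have hmv := hmem v hv hv2
  refine ⟨hmu, hmv, ?_⟩
  -- pointwise inequality
  have hpt : ∀ x, ε * (u x - v x) ^ 2 ≤ (βt (u x) - βt (v x)) * (u x - v x) := by
    intro x
    set a := u x
    set b := v x
    rw [hβt a, hβt b]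
    have hkey : 0 ≤ (β (g a) - β (g b)) * (a - b) := by
      rcases le_total a b with h | h
      · nlinarith [hβm (hgm h)]
      · nlinarith [hβm (hgm h)]
    nlinarith
  -- integrability
  have hint1 : Integrable (fun x => ε * (u x - v x) ^ 2) μ :=
    ((hu2.sub hv2).integrable_sq).const_mul ε
  have hint2 : Integrable (fun x => (βt (u x) - βt (v x)) * (u x - v x)) μ :=
    aux_integrable_mul (hmu.sub hmv) (hu2.sub hv2)
  calc ε * ∫ x, (u x - v x) ^ 2 ∂μ = ∫ x, ε * (u x - v x) ^ 2 ∂μ := (integral_const_mul ε _).symm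
    _ ≤ ∫ x, (βt (u x) - βt (v x)) * (u x - v x) ∂μ :=
        integral_mono hint1 hint2 hpt
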